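/- The min-relative entropy is bounded above by the relative entropy, which is bounded above by the max-relative entropy: for probability distributions p, q on Fin n with q_i > 0 whenever p_i > 0, one has D_min(p‖q) ≤ Σ_{i : p_i>0} p_i · ln(p_i/q_i) ≤ D_max(p‖q). In particular D_min(p‖q) ≤ D_max(p‖q), so the single-shot free energy F_min = F_β + kT·D_min never exceeds F_max = F_β + kT·D_max. -/

import Mathlib

open Finset

/-- A probability distribution on a finite type. -/
def IsProbDist {ι : Type*} [Fintype ι] (p : ι → ℝ) : Prop :=
  (∀ i, 0 ≤ p i) ∧ ∑ i, p i = 1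

/-- The min-relative entropy `D_min(p‖q) = -ln (∑_{i : p i > 0} q i)`. -/
noncomputable def Dmin {ι : Type*} [Fintype ι] (p q : ι → ℝ) : ℝ :=
  -Real.log (∑ i ∈ Finset.univ.filter (fun i => 0 < p i), q i)

/-- The max-relative entropy `D_max(p‖q) = ln (max_{i : p i > 0} p i / q i)`. -/
noncomputable def Dmax {ι : Type*} [Fintype ι] (p q : ι → ℝ) : ℝ :=
  Real.log (sSup {r : ℝ | ∃ i, 0 < p i ∧ r = p i / q i})

/-- `D_min ≤` relative entropy `≤ D_max`; in particular the single-shot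
free energy `F_min = F_β + kT·D_min` never exceeds `F_max = F_β + kT·D_max`. -/
theorem Dmin_le_relEnt_le_Dmax {n : ℕ} (p q : Fin n → ℝ)
    (hp : IsProbDist p) (hq : IsProbDist q) (hpq : ∀ i, 0 < p i → 0 < q i) :
    Dmin p q ≤ ∑ i ∈ Finset.univ.filter (fun i => 0 < p i), p i * Real.log (p i / q i) ∧
    ∑ i ∈ Finset.univ.filter (fun i => 0 < p i), p i * Real.log (p i / q i) ≤ Dmax p q ∧
    Dmin p q ≤ Dmax p q ∧
    ∀ Fβ kT : ℝ, 0 ≤ kT → Fβ + kT * Dmin p q ≤ Fβ + kT * Dmax p q := by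
  obtain ⟨hp0, hp1⟩ := hp
  set S := Finset.univ.filter (fun i => 0 < p i) with hS
  have hpS : ∑ i ∈ S, p i = 1 := by
    rw [← hp1]
    apply Finset.sum_subset (Finset.subset_univ _)
    intro i _ hi
    simp only [hS, Finset.mem_filter, Finset.mem_univ, true_and, not_lt] at hi
    exact le_antisymm hi (hp0 i)
  have hSne : S.Nonempty := by
    rcases Finset.eq_empty_or_nonempty S with h | h
    · rw [h] at hpS; simp at hpS
    · exact h
  have hpPos : ∀ i ∈ S, 0 < p i := by
    intro i hi; simpa [hS] using hi
  have hq0 : ∀ i ∈ S, 0 < q i := fun i hi => hpq i (hpPos i hi)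
  set Q := ∑ i ∈ S, q i with hQ
  have hQpos : 0 < Q := Finset.sum_pos hq0 hSne
  have h1 : Dmin p q ≤ ∑ i ∈ S, p i * Real.log (p i / q i) := by
    rw [Dmin]
    have key : ∑ i ∈ S, p i * Real.log (q i / (Q * p i)) ≤ 0 := by
      have hterm : ∀ i ∈ S, p i * Real.log (q i / (Q * p i)) ≤ q i / Q - p i := by
        intro i hi
        have hpi := hpPos i hi
        have hqi := hq0 i hi
        have hx : 0 < q i / (Q * p i) := by positivity
        have hlog := Real.log_le_sub_one_of_pos hx
        calc p i * Real.log (q i / (Q * p i)) ≤ p i * (q i / (Q * p i) - 1) :=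
              mul_le_mul_of_nonneg_left hlog hpi.le
          _ = q i / Q - p i := by field_simp
      calc ∑ i ∈ S, p i * Real.log (q i / (Q * p i)) ≤ ∑ i ∈ S, (q i / Q - p i) :=
            Finset.sum_le_sum hterm
        _ = 0 := by
            rw [Finset.sum_sub_distrib, ← Finset.sum_div, hpS, ← hQ]
            field_simp
            ring
    have expand : ∀ i ∈ S, p i * Real.log (q i / (Q * p i)) =
        -(p i * Real.log (p i / q i)) - p i * Real.log Q := by
      intro i hi
      have hpi := hpPos i hi
      have hqi := hq0 i hi
      rw [Real.log_div hqi.ne' (by positivity), Real.log_mul hQpos.ne' hpi.ne',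
          Real.log_div hpi.ne' hqi.ne']
      ring
    rw [Finset.sum_congr rfl expand] at key
    have : ∑ i ∈ S, (-(p i * Real.log (p i / q i)) - p i * Real.log Q)
        = -(∑ i ∈ S, p i * Real.log (p i / q i)) - Real.log Q := by
      rw [Finset.sum_sub_distrib, ← Finset.sum_mul, hpS]
      simp [Finset.sum_neg_distrib]
    rw [this] at key
    linarith
  have h2 : ∑ i ∈ S, p i * Real.log (p i / q i) ≤ Dmax p q := by
    rw [Dmax]
    have hTeq : {r : ℝ | ∃ i, 0 < p i ∧ r = p i / q i}
        = ↑(S.image (fun i => p i / q i)) := by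
      ext r
      simp [hS, eq_comm]
    set M := sSup {r : ℝ | ∃ i, 0 < p i ∧ r = p i / q i} with hM
    have hbdd : BddAbove {r : ℝ | ∃ i, 0 < p i ∧ r = p i / q i} := by
      rw [hTeq]; exact Finset.bddAbove _
    have hle : ∀ i ∈ S, p i / q i ≤ M := by
      intro i hi
      exact le_csSup hbdd ⟨i, hpPos i hi, rfl⟩
    obtain ⟨i0, hi0⟩ := hSne
    have hMpos : 0 < M :=
      lt_of_lt_of_le (div_pos (hpPos i0 hi0) (hq0 i0 hi0)) (hle i0 hi0)
    calc ∑ i ∈ S, p i * Real.log (p i / q i) ≤ ∑ i ∈ S, p i * Real.log M := by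
          apply Finset.sum_le_sum
          intro i hi
          exact mul_le_mul_of_nonneg_left
            (Real.log_le_log (div_pos (hpPos i hi) (hq0 i hi)) (hle i hi)) (hpPos i hi).le
      _ = Real.log M := by rw [← Finset.sum_mul, hpS, one_mul]
  refine ⟨h1, h2, le_trans h1 h2, fun Fβ kT hkT => ?_⟩
  have := mul_le_mul_of_nonneg_left (le_trans h1 h2) hkT
  linarith
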